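/- arXiv:1405.2642 — 15 statements merged into one kernel-verified Lean document; each statement's English description precedes it below -/
import Mathlib

section
/- Let ≤ be a rational order for (S,M) and assume M ⊆ S. Define the revision operator r : Set W → Set W by r a = Min(a ∩ S, ≤) for every sentence a ⊆ W. Then r satisfies the revision postulates for (S,M), i.e. (∔1)–(∔4), (∔6) and (∔7) all hold. -/
/-- `Min(F, ≤)`: elements of `F` with no strictly smaller element in `F`,
where `y < x` means `le y x ∧ ¬ le x y`. -/
def MinSet {W : Type*} (le : W → W → Prop) (F : Set W) : Set W :=
  {x | x ∈ F ∧ ¬ ∃ y ∈ F, le y x ∧ ¬ le x y}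

/-- `le` is a rational order for `(S, M)`. -/
def RationalOrder {W : Type*} (le : W → W → Prop) (S M : Set W) : Prop :=
  (∀ x ∈ S, le x x) ∧
  (∀ x ∈ S, ∀ y ∈ S, ∀ z ∈ S, le x y → le y z → le x z) ∧
  (∀ x ∈ S, ∀ y ∈ S, le x y ∨ le y x) ∧
  MinSet le S = M ∧
  (∀ F ⊆ S, F.Nonempty → (MinSet le F).Nonempty)

/-- `r` satisfies the revision postulates for `(S, M)`. -/
def RevisionPostulates {W : Type*} (S M : Set W) (r : Set W → Set W) : Prop :=
  ∀ a b : Set W,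
    r a ⊆ S ∧
    r a ⊆ a ∧
    ((a ∩ S).Nonempty ↔ (r a).Nonempty) ∧
    ((M ∩ a).Nonempty → r a = M ∩ a) ∧
    r a ∩ b ⊆ r (a ∩ b) ∧
    ((r a ∩ b).Nonempty → r (a ∩ b) ⊆ r a ∩ b)

/-- Revision constructed from a rational order satisfies the revision postulates. -/
theorem revision_from_rational_order_satisfies_postulates
    {W : Type*} (S M : Set W) (le : W → W → Prop)
    (hMS : M ⊆ S) (hle : RationalOrder le S M) :
    RevisionPostulates S M (fun a => MinSet le (a ∩ S)) := by
  obtain ⟨hrefl, htrans, htot, hfaith, hmin⟩ := hle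
  intro a b
  refine ⟨?_, ?_, ?_, ?_, ?_, ?_⟩
  · intro x hx; exact hx.1.2
  · intro x hx; exact hx.1.1
  · constructor
    · intro hne
      exact hmin (a ∩ S) (Set.inter_subset_right) hne
    · rintro ⟨x, hx⟩; exact ⟨x, hx.1⟩
  · rintro ⟨m, hmM, hma⟩
    ext x
    constructor
    · rintro ⟨⟨hxa, hxS⟩, hxmin⟩
      refine ⟨?_, hxa⟩
      rw [← hfaith]
      refine ⟨hxS, ?_⟩
      rintro ⟨y, hyS, hyx, hxy⟩
      apply hxmin
      refine ⟨m, ⟨hma, hMS hmM⟩, ?_, ?_⟩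
      · -- m ≤ y then m ≤ x
        have hmy : le m y := by
          rcases htot m (hMS hmM) y hyS with h | h
          · exact h
          · -- y ≤ m; m minimal in S so m ≤ y
            have := (hfaith ▸ hmM : m ∈ MinSet le S).2
            by_contra hc
            exact this ⟨y, hyS, h, hc⟩
        exact htrans m (hMS hmM) y hyS x hxS hmy hyx
      · intro hxm
        exact hxy (htrans x hxS m (hMS hmM) y hyS hxm (by
          rcases htot m (hMS hmM) y hyS with h | h
          · exact h
          · have := (hfaith ▸ hmM : m ∈ MinSet le S).2
            by_contra hc
            exact this ⟨y, hyS, h, hc⟩))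
    · rintro ⟨hxM, hxa⟩
      have hxMin : x ∈ MinSet le S := hfaith ▸ hxM
      refine ⟨⟨hxa, hxMin.1⟩, ?_⟩
      rintro ⟨y, ⟨hya, hyS⟩, hyx, hxy⟩
      exact hxMin.2 ⟨y, hyS, hyx, hxy⟩
  · rintro x ⟨⟨⟨hxa, hxS⟩, hxmin⟩, hxb⟩
    refine ⟨⟨⟨hxa, hxb⟩, hxS⟩, ?_⟩
    rintro ⟨y, ⟨⟨hya, _⟩, hyS⟩, hyx, hxy⟩
    exact hxmin ⟨y, ⟨hya, hyS⟩, hyx, hxy⟩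
  · rintro ⟨z, ⟨⟨⟨hza, hzS⟩, hzmin⟩, hzb⟩⟩ x ⟨⟨⟨hxa, hxb⟩, hxS⟩, hxmin⟩
    refine ⟨⟨⟨hxa, hxS⟩, ?_⟩, hxb⟩
    rintro ⟨y, ⟨hya, hyS⟩, hyx, hxy⟩
    -- z ≤ y since z minimal in a∩S
    have hzy : le z y := by
      rcases htot z hzS y hyS with h | h
      · exact h
      · by_contra hc
        exact hzmin ⟨y, ⟨hya, hyS⟩, h, hc⟩
    apply hxmin
    refine ⟨z, ⟨⟨hza, hzb⟩, hzS⟩, htrans z hzS y hyS x hxS hzy hyx, ?_⟩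
    intro hxz
    exact hxy (htrans x hxS z hzS y hyS hxz hzy)
end

section
/- Assume M ⊆ S and M is nonempty, and let r : Set W → Set W satisfy the revision postulates for (S,M). Then there exists a rational order ≤ for (S,M) such that r a = Min(a ∩ S, ≤) for every sentence a ⊆ W. (The order can be taken to be: for x,y ∈ S, x ≤ y iff x ∈ M or x ∈ r {x,y}.) -/
/-- Any operator satisfying the revision postulates arises from a rational order. -/
theorem rational_order_exists_for_revision
    {W : Type*} (S M : Set W) (r : Set W → Set W)
    (hMS : M ⊆ S) (hMne : M.Nonempty)
    (hr : RevisionPostulates S M r) :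
    ∃ le : W → W → Prop, RationalOrder le S M ∧
      ∀ a : Set W, r a = MinSet le (a ∩ S) := by
  classical
  have h1 : ∀ a : Set W, r a ⊆ S := fun a => (hr a a).1
  have h2 : ∀ a : Set W, r a ⊆ a := fun a => (hr a a).2.1
  have h3 : ∀ a : Set W, (a ∩ S).Nonempty ↔ (r a).Nonempty := fun a => (hr a a).2.2.1
  have h4 : ∀ a : Set W, (M ∩ a).Nonempty → r a = M ∩ a := fun a => (hr a a).2.2.2.1
  have h6 : ∀ a b : Set W, r a ∩ b ⊆ r (a ∩ b) := fun a b => (hr a b).2.2.2.2.1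
  have h7 : ∀ a b : Set W, (r a ∩ b).Nonempty → r (a ∩ b) ⊆ r a ∩ b :=
    fun a b => (hr a b).2.2.2.2.2
  set le : W → W → Prop := fun x y => x ∈ M ∨ x ∈ r {x, y} with hledef
  -- helper: if x ∈ r a and x, y ∈ a then x ∈ r {x, y}
  have hdown : ∀ (a : Set W) (x y : W), x ∈ a → y ∈ a → x ∈ r a → x ∈ r {x, y} := by
    intro a x y hx hy hxr
    have heq : a ∩ ({x, y} : Set W) = {x, y} :=
      Set.inter_eq_right.mpr (Set.pair_subset hx hy)
    have := h6 a {x, y} ⟨hxr, by simp⟩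
    rwa [heq] at this
  -- helper: if x ∈ r {x, y}, x, y ∈ a and y ∈ r a then x ∈ r a
  have hup : ∀ (a : Set W) (x y : W), x ∈ a → y ∈ a → x ∈ r {x, y} → y ∈ r a → x ∈ r a := by
    intro a x y hx hy hxp hyr
    have heq : a ∩ ({x, y} : Set W) = {x, y} :=
      Set.inter_eq_right.mpr (Set.pair_subset hx hy)
    have hne : (r a ∩ ({x, y} : Set W)).Nonempty := ⟨y, hyr, by simp⟩
    have := h7 a {x, y} hne
    rw [heq] at this
    exact (this hxp).1
  -- le is reflexive on S
  have hrefl : ∀ x ∈ S, le x x := by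
    intro x hx
    right
    have hpe : ({x, x} : Set W) = {x} := by simp
    rw [hpe]
    have hne : (r {x} : Set W).Nonempty := (h3 {x}).mp ⟨x, by simp, hx⟩
    obtain ⟨w, hw⟩ := hne
    have := h2 {x} hw
    simp at this
    rwa [this] at hw
  -- le is total on S
  have htot : ∀ x ∈ S, ∀ y ∈ S, le x y ∨ le y x := by
    intro x hx y hy
    have hne : (r {x, y} : Set W).Nonempty := (h3 {x, y}).mp ⟨x, by simp, hx⟩
    obtain ⟨w, hw⟩ := hne
    have hw2 := h2 {x, y} hw
    rcases hw2 with h | h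
    · subst h; left; right; exact hw
    · simp only [Set.mem_singleton_iff] at h
      subst h; right; right
      rwa [Set.pair_comm w x]
  -- transitivity on S
  have htrans : ∀ x ∈ S, ∀ y ∈ S, ∀ z ∈ S, le x y → le y z → le x z := by
    intro x hx y hy z hz hxy hyz
    rcases hxy with hxM | hxr
    · left; exact hxM
    · right
      set a : Set W := {x, y, z} with ha
      have hxa : x ∈ a := by simp [ha]
      have hya : y ∈ a := by simp [ha]
      have hza : z ∈ a := by simp [ha]
      have hstep1 : y ∈ r a → x ∈ r a := fun h => hup a x y hxa hya hxr h
      have hstep2 : z ∈ r a → y ∈ r a := by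
        intro hzr
        rcases hyz with hyM | hyr
        · have := h4 a ⟨y, hyM, hya⟩
          rw [this]; exact ⟨hyM, hya⟩
        · exact hup a y z hya hza hyr hzr
      have hne : (r a).Nonempty := (h3 a).mp ⟨x, hxa, hx⟩
      obtain ⟨w, hw⟩ := hne
      have hwmem := h2 a hw
      have hxar : x ∈ r a := by
        simp only [ha, Set.mem_insert_iff, Set.mem_singleton_iff] at hwmem
        rcases hwmem with h | h | h
        · subst h; exact hw
        · subst h; exact hstep1 hw
        · subst h; exact hstep1 (hstep2 hw)
      exact hdown a x z hxa hza hxar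
  -- representation
  have hrep : ∀ a : Set W, r a = MinSet le (a ∩ S) := by
    intro a
    ext x
    constructor
    · intro hxr
      have hxa : x ∈ a := h2 a hxr
      have hxS : x ∈ S := h1 a hxr
      refine ⟨⟨hxa, hxS⟩, ?_⟩
      rintro ⟨y, ⟨hya, hyS⟩, hylx, hnxly⟩
      apply hnxly
      right
      exact hdown a x y hxa hya hxr
    · rintro ⟨⟨hxa, hxS⟩, hmin⟩
      have hne : (r a).Nonempty := (h3 a).mp ⟨x, hxa, hxS⟩
      obtain ⟨z, hz⟩ := hne
      have hza : z ∈ a := h2 a hz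
      have hzS : z ∈ S := h1 a hz
      have hxlz : le x z := by
        by_contra hn
        rcases htot x hxS z hzS with h | h
        · exact hn h
        · exact hmin ⟨z, ⟨hza, hzS⟩, h, hn⟩
      rcases hxlz with hxM | hxr
      · have := h4 a ⟨x, hxM, hxa⟩
        rw [this]; exact ⟨hxM, hxa⟩
      · exact hup a x z hxa hza hxr hz
  -- faithfulness
  have hfaith : MinSet le S = M := by
    ext x
    constructor
    · rintro ⟨hxS, hmin⟩
      by_contra hxM
      obtain ⟨m, hm⟩ := hMne
      apply hmin
      refine ⟨m, hMS hm, Or.inl hm, ?_⟩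
      rintro (h | h)
      · exact hxM h
      · have := h4 {x, m} ⟨m, hm, by simp⟩
        rw [this] at h
        exact hxM h.1
    · intro hxM
      refine ⟨hMS hxM, ?_⟩
      rintro ⟨y, hyS, hylx, hnxly⟩
      exact hnxly (Or.inl hxM)
  refine ⟨le, ⟨hrefl, htrans, htot, hfaith, ?_⟩, hrep⟩
  intro F hFS hFne
  have : F ∩ S = F := Set.inter_eq_left.mpr hFS
  have hne : (r F).Nonempty := (h3 F).mp (by rwa [this])
  rw [hrep F, this] at hne
  exact hne
end

section
/- (Representation theorem for revision.) Assume M ⊆ S and M is nonempty, and let r : Set W → Set W. Then r satisfies the revision postulates for (S,M) if and only if there exists a rational order ≤ for (S,M) such that r a = Min(a ∩ S, ≤) for every sentence a ⊆ W. -/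
/-- Representation theorem for revision. -/
theorem revision_representation
    {W : Type*} (S M : Set W) (r : Set W → Set W)
    (hMS : M ⊆ S) (hMne : M.Nonempty) :
    RevisionPostulates S M r ↔
      ∃ le : W → W → Prop, RationalOrder le S M ∧
        ∀ a : Set W, r a = MinSet le (a ∩ S) := by
  constructor
  · intro hr
    classical
    -- extract the postulates
    have hsub : ∀ a : Set W, r a ⊆ a ∩ S := fun a =>
      Set.subset_inter (hr a a).2.1 (hr a a).1
    have hne : ∀ a : Set W, (a ∩ S).Nonempty → (r a).Nonempty := fun a h =>
      ((hr a a).2.2.1).mp h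
    have hvac : ∀ a : Set W, (M ∩ a).Nonempty → r a = M ∩ a := fun a =>
      (hr a a).2.2.2.1
    have h6 : ∀ a b : Set W, r a ∩ b ⊆ r (a ∩ b) := fun a b => (hr a b).2.2.2.2.1
    have h7 : ∀ a b : Set W, (r a ∩ b).Nonempty → r (a ∩ b) ⊆ r a ∩ b :=
      fun a b => (hr a b).2.2.2.2.2
    have hps : ∀ (a : Set W) (x y : W), x ∈ a → y ∈ a → a ∩ {x, y} = ({x, y} : Set W) :=
      fun a x y hx hy => Set.inter_eq_self_of_subset_right (Set.pair_subset hx hy)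
    set le : W → W → Prop := fun x y => x ∈ S → y ∈ S → x ∈ r {x, y} with hle
    -- totality
    have htot : ∀ x ∈ S, ∀ y ∈ S, x ∈ r {x, y} ∨ y ∈ r {y, x} := by
      intro x hx y hy
      obtain ⟨w, hw⟩ := hne {x, y} ⟨x, Set.mem_insert x {y}, hx⟩
      rcases (hsub _ hw).1 with h | h
      · left; rwa [h] at hw
      · right; rw [Set.mem_singleton_iff] at h; subst h
        rwa [Set.pair_comm w x]
    -- the main equation
    have hmain : ∀ a : Set W, r a = MinSet le (a ∩ S) := by
      intro a
      apply Set.Subset.antisymm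
      · intro x hx
        have hxaS := hsub a hx
        refine ⟨hxaS, ?_⟩
        rintro ⟨y, hy, hyx, hxy⟩
        apply hxy
        intro hxS hyS
        have h1 := h6 a {x, y}
        rw [hps a x y hxaS.1 hy.1] at h1
        exact h1 ⟨hx, Set.mem_insert x {y}⟩
      · rintro x ⟨hxa, hmin⟩
        obtain ⟨z, hz⟩ := hne a ⟨x, hxa⟩
        have hzaS := hsub a hz
        have hxz : x ∈ r {x, z} := by
          rcases htot x hxa.2 z hzaS.2 with h | h
          · exact h
          · by_contra hc
            exact hmin ⟨z, hzaS, fun _ _ => h, fun h' => hc (h' hxa.2 hzaS.2)⟩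
        have h1 := h7 a {x, z} ⟨z, hz, Set.mem_insert_iff.2 (Or.inr rfl)⟩
        rw [hps a x z hxa.1 hzaS.1] at h1
        exact (h1 hxz).1
    refine ⟨le, ⟨?_, ?_, ?_, ?_, ?_⟩, hmain⟩
    · -- reflexivity
      intro x hx _ _
      have : r {x} = {x} := by
        apply Set.Subset.antisymm (fun y hy => (hsub _ hy).1)
        obtain ⟨w, hw⟩ := hne {x} ⟨x, rfl, hx⟩
        have hwx : w = x := (hsub _ hw).1
        subst hwx
        intro y hy
        rw [Set.mem_singleton_iff] at hy
        subst hy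
        exact hw
      rw [Set.pair_eq_singleton, this]
      rfl
    · -- transitivity
      intro x hx y hy z hz hxy hyz
      have hxy := hxy hx hy
      have hyz := hyz hy hz
      intro _ _
      set a : Set W := {x, y, z} with ha
      have hxa : x ∈ a := Set.mem_insert x _
      have hya : y ∈ a := Set.mem_insert_iff.2 (Or.inr (Set.mem_insert y _))
      have hza : z ∈ a := Set.mem_insert_iff.2 (Or.inr (Set.mem_insert_iff.2 (Or.inr rfl)))
      have hyra : y ∈ r a → x ∈ r a := by
        intro h
        have h1 := h7 a {x, y} ⟨y, h, Set.mem_insert_iff.2 (Or.inr rfl)⟩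
        rw [hps a x y hxa hya] at h1
        exact (h1 hxy).1
      have hzra : z ∈ r a → y ∈ r a := by
        intro h
        have h1 := h7 a {y, z} ⟨z, h, Set.mem_insert_iff.2 (Or.inr rfl)⟩
        rw [hps a y z hya hza] at h1
        exact (h1 hyz).1
      have hxra : x ∈ r a := by
        obtain ⟨w, hw⟩ := hne a ⟨x, hxa, hx⟩
        rcases (hsub _ hw).1 with h | h | h
        · rwa [h] at hw
        · exact hyra (by rwa [h] at hw)
        · rw [Set.mem_singleton_iff] at h
          exact hyra (hzra (by rwa [h] at hw))
      have h1 := h6 a {x, z}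
      rw [hps a x z hxa hza] at h1
      exact h1 ⟨hxra, Set.mem_insert x _⟩
    · -- totality
      intro x hx y hy
      rcases htot x hx y hy with h | h
      · exact Or.inl (fun _ _ => h)
      · exact Or.inr (fun _ _ => h)
    · -- faithfulness
      apply Set.Subset.antisymm
      · rintro x ⟨hxS, hmin⟩
        by_contra hxM
        obtain ⟨m, hm⟩ := hMne
        have hv : r {m, x} = M ∩ {m, x} :=
          hvac {m, x} ⟨m, hm, Set.mem_insert m _⟩
        have hv' : r {x, m} = M ∩ {x, m} :=
          hvac {x, m} ⟨m, hm, Set.mem_insert_iff.2 (Or.inr rfl)⟩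
        refine hmin ⟨m, hMS hm, fun _ _ => ?_, fun h => ?_⟩
        · rw [hv]; exact ⟨hm, Set.mem_insert m _⟩
        · exact hxM ((hv' ▸ h hxS (hMS hm)) : x ∈ M ∩ {x, m}).1
      · intro x hx
        refine ⟨hMS hx, ?_⟩
        rintro ⟨y, hyS, _, hxy⟩
        apply hxy
        intro hxS _
        have hv : r {x, y} = M ∩ {x, y} :=
          hvac {x, y} ⟨x, hx, Set.mem_insert x _⟩
        rw [hv]
        exact ⟨hx, Set.mem_insert x _⟩
    · -- minimality
      intro F hF hFne
      have : F ∩ S = F := Set.inter_eq_self_of_subset_left hF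
      rw [← this, ← hmain F]
      exact hne F (by rw [this]; exact hFne)
  · rintro ⟨le, ⟨hrefl, htrans, htot, hfaith, hminim⟩, heq⟩
    -- minimal elements of S are below everything in S
    have hMbelow : ∀ m ∈ M, ∀ x ∈ S, le m x := by
      intro m hm x hx
      rw [← hfaith] at hm
      rcases htot m hm.1 x hx with h | h
      · exact h
      · by_contra hc
        exact hm.2 ⟨x, hx, h, hc⟩
    intro a b
    refine ⟨?_, ?_, ?_, ?_, ?_, ?_⟩
    · intro x hx; rw [heq a] at hx; exact hx.1.2
    · intro x hx; rw [heq a] at hx; exact hx.1.1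
    · constructor
      · intro h
        rw [heq a]
        exact hminim (a ∩ S) Set.inter_subset_right h
      · rintro ⟨x, hx⟩
        rw [heq a] at hx
        exact ⟨x, hx.1⟩
    · intro hMa
      rw [heq a]
      apply Set.Subset.antisymm
      · rintro x ⟨hxaS, hmin⟩
        obtain ⟨m, hmM, hma⟩ := hMa
        have hmS := hMS hmM
        have hmx : le m x := hMbelow m hmM x hxaS.2
        have hxm : le x m := by
          by_contra hc
          exact hmin ⟨m, ⟨hma, hmS⟩, hmx, hc⟩
        refine ⟨?_, hxaS.1⟩
        rw [← hfaith] at hmM ⊢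
        refine ⟨hxaS.2, ?_⟩
        rintro ⟨y, hyS, hyx, hxy⟩
        refine hmM.2 ⟨y, hyS, htrans y hyS x hxaS.2 m hmS hyx hxm, fun h => ?_⟩
        exact hxy (htrans x hxaS.2 m hmS y hyS hxm h)
      · rintro m ⟨hmM, hma⟩
        refine ⟨⟨hma, hMS hmM⟩, ?_⟩
        rintro ⟨y, hy, hym, hmy⟩
        rw [← hfaith] at hmM
        exact hmM.2 ⟨y, hy.2, hym, hmy⟩
    · intro x hx
      rw [heq a] at hx
      rw [heq (a ∩ b)]
      obtain ⟨⟨⟨hxa, hxS⟩, hmin⟩, hxb⟩ := hx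
      refine ⟨⟨⟨hxa, hxb⟩, hxS⟩, ?_⟩
      rintro ⟨y, hy, hyx, hxy⟩
      exact hmin ⟨y, ⟨hy.1.1, hy.2⟩, hyx, hxy⟩
    · intro hne'
      rw [heq a] at hne' ⊢
      rw [heq (a ∩ b)]
      obtain ⟨w, ⟨⟨hwa, hwS⟩, hwmin⟩, hwb⟩ := hne'
      rintro z ⟨⟨⟨hza, hzb⟩, hzS⟩, hzmin⟩
      have hzw : le z w := by
        rcases htot z hzS w hwS with h | h
        · exact h
        · by_contra hc
          exact hzmin ⟨w, ⟨⟨hwa, hwb⟩, hwS⟩, h, hc⟩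
      refine ⟨⟨⟨hza, hzS⟩, ?_⟩, hzb⟩
      rintro ⟨y, hy, hyz, hzy⟩
      refine hwmin ⟨y, hy, htrans y hy.2 z hzS w hwS hyz hzw, fun h => ?_⟩
      exact hzy (htrans z hzS w hwS y hy.2 hzw h)
end

section
/- (Levi identity.) Assume M ⊆ S and let c : Set W → Set W satisfy the contraction postulates for (S,M). Define the revision operator r : Set W → Set W by the Levi identity r a = c (W \ a) ∩ a for every sentence a ⊆ W. Then r satisfies the revision postulates for (S,M). -/
/-- `c` satisfies the contraction postulates for `(S, M)`. -/
def ContractionPostulates {W : Type*} (S M : Set W) (c : Set W → Set W) : Prop :=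
  ∀ a b : Set W,
    c a ⊆ S ∧
    ((S \ a).Nonempty → ¬ c a ⊆ a) ∧
    M ⊆ c a ∧
    (¬ M ⊆ a → c a = M) ∧
    c a ∩ a ⊆ M ∧
    c (a ∩ b) ⊆ c a ∪ c b ∧
    (¬ c (a ∩ b) ⊆ a → c a ⊆ c (a ∩ b))

/-- Levi identity: revision obtained from a rational contraction is rational. -/
theorem levi_identity
    {W : Type*} (S M : Set W) (c : Set W → Set W)
    (hMS : M ⊆ S) (hc : ContractionPostulates S M c) :
    RevisionPostulates S M (fun a => c aᶜ ∩ a) := by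
  intro a b
  obtain ⟨h1a, h2a, h3a, h4a, h5a, -, -⟩ := hc aᶜ aᶜ
  have key : (aᶜ ∪ bᶜ) ∩ (aᶜ ∪ b) = aᶜ := by
    ext x; by_cases hx : x ∈ b <;> simp [hx]
  obtain ⟨-, -, h3', -, h5', h6', h7'⟩ := hc (aᶜ ∪ bᶜ) (aᶜ ∪ b)
  rw [key] at h6' h7'
  refine ⟨fun x hx => h1a hx.1, fun x hx => hx.2, ?_, ?_, ?_, ?_⟩
  · constructor
    · rintro ⟨x, hxa, hxS⟩
      have hne : (S \ aᶜ).Nonempty := ⟨x, hxS, by simpa using hxa⟩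
      obtain ⟨y, hy1, hy2⟩ := Set.not_subset.mp (h2a hne)
      exact ⟨y, hy1, by simpa using hy2⟩
    · rintro ⟨x, hx1, hx2⟩
      exact ⟨x, hx2, h1a hx1⟩
  · rintro ⟨x, hxM, hxa⟩
    have : ¬ M ⊆ aᶜ := fun h => (h hxM) hxa
    simp only [h4a this]
  · obtain ⟨-, -, -, -, h5b, -, -⟩ := hc (aᶜ ∪ b) (aᶜ ∪ b)
    rintro x ⟨⟨hxc, hxa⟩, hxb⟩
    refine ⟨?_, hxa, hxb⟩
    rw [Set.compl_inter]
    rcases h6' hxc with h | h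
    · exact h
    · exact h3' (h5b ⟨h, Or.inr hxb⟩)
  · rintro ⟨x, ⟨hxc, hxa⟩, hxb⟩
    have hns : ¬ c aᶜ ⊆ aᶜ ∪ bᶜ := fun h => by
      rcases h hxc with h' | h' <;> [exact h' hxa; exact h' hxb]
    have hsub : c (aᶜ ∪ bᶜ) ⊆ c aᶜ := h7' hns
    rintro y ⟨hyc, hya, hyb⟩
    rw [Set.compl_inter] at hyc
    exact ⟨⟨hsub hyc, hya⟩, hyb⟩
end

section
/- (Harper identity.) Assume M ⊆ S and let r : Set W → Set W satisfy the revision postulates for (S,M). Define the contraction operator c : Set W → Set W by the Harper identity c a = M ∪ r (W \ a) for every sentence a ⊆ W. Then c satisfies the contraction postulates for (S,M). -/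
/-- Harper identity: contraction obtained from a rational revision is rational. -/
theorem harper_identity
    {W : Type*} (S M : Set W) (r : Set W → Set W)
    (hMS : M ⊆ S) (hr : RevisionPostulates S M r) :
    ContractionPostulates S M (fun a => M ∪ r aᶜ) := by
  intro a b
  have hcompl : (a ∩ b)ᶜ = aᶜ ∪ bᶜ := Set.compl_inter a b
  have hia : (aᶜ ∪ bᶜ) ∩ aᶜ = aᶜ := Set.inter_eq_right.mpr Set.subset_union_left
  have hib : (aᶜ ∪ bᶜ) ∩ bᶜ = bᶜ := Set.inter_eq_right.mpr Set.subset_union_right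
  refine ⟨?_, ?_, Set.subset_union_left, ?_, ?_, ?_, ?_⟩
  · -- c1
    exact Set.union_subset hMS (hr aᶜ a).1
  · -- c2
    intro h hsub
    have h3 := (hr aᶜ a).2.2.1
    have hne : (r aᶜ).Nonempty := h3.mp (by
      obtain ⟨x, hxS, hxa⟩ := h
      exact ⟨x, hxa, hxS⟩)
    obtain ⟨x, hx⟩ := hne
    exact (hr aᶜ a).2.1 hx (hsub (Or.inr hx))
  · -- c4
    intro h
    obtain ⟨m, hmM, hma⟩ := Set.not_subset.mp h
    have h4 := (hr aᶜ a).2.2.2.1 ⟨m, hmM, hma⟩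
    simp only [h4]
    rw [Set.union_eq_left]
    exact Set.inter_subset_left
  · -- c5
    intro x ⟨hx, hxa⟩
    rcases hx with hx | hx
    · exact hx
    · exact absurd hxa ((hr aᶜ a).2.1 hx)
  · -- c7
    rintro x (hx | hx)
    · exact Or.inl (Or.inl hx)
    rw [hcompl] at hx
    have hmem := (hr (aᶜ ∪ bᶜ) a).2.1 hx
    rcases hmem with hxa | hxb
    · have := (hr (aᶜ ∪ bᶜ) aᶜ).2.2.2.2.1 ⟨hx, hxa⟩
      rw [hia] at this
      exact Or.inl (Or.inr this)
    · have := (hr (aᶜ ∪ bᶜ) bᶜ).2.2.2.2.1 ⟨hx, hxb⟩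
      rw [hib] at this
      exact Or.inr (Or.inr this)
  · -- c8
    intro h
    simp only [hcompl] at h ⊢
    obtain ⟨x, hx, hxa⟩ := Set.not_subset.mp h
    rcases hx with hxM | hxr
    · -- r aᶜ = M ∩ aᶜ ⊆ M
      have h4 := (hr aᶜ a).2.2.2.1 ⟨x, hxM, hxa⟩
      rintro y (hy | hy)
      · exact Or.inl hy
      · rw [h4] at hy; exact Or.inl hy.1
    · have h7 := (hr (aᶜ ∪ bᶜ) aᶜ).2.2.2.2.2 ⟨x, hxr, hxa⟩
      rw [hia] at h7
      rintro y (hy | hy)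
      · exact Or.inl hy
      · exact Or.inr (h7 hy).1
end

section
/- Let ≤ be a rational order for (S,M) and assume M ⊆ S. Define the contraction operator c : Set W → Set W by c a = M ∪ Min((W \ a) ∩ S, ≤) for every sentence a ⊆ W. Then c satisfies the contraction postulates for (S,M), i.e. (−̇1)–(−̇5), (−̇7) and (−̇8) all hold. -/
/-- Contraction constructed from a rational order satisfies the contraction postulates. -/
theorem contraction_from_rational_order_satisfies_postulates
    {W : Type*} (S M : Set W) (le : W → W → Prop)
    (hMS : M ⊆ S) (hle : RationalOrder le S M) :
    ContractionPostulates S M (fun a => M ∪ MinSet le (aᶜ ∩ S)) := by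
  obtain ⟨hrefl, htrans, htot, hfaith, hmin⟩ := hle
  -- A: restriction of minimality to a subset
  have lemA : ∀ F G : Set W, F ⊆ G → ∀ x, x ∈ MinSet le G → x ∈ F → x ∈ MinSet le F := by
    intro F G hFG x hx hxF
    exact ⟨hxF, fun ⟨y, hyF, hlt⟩ => hx.2 ⟨y, hFG hyF, hlt⟩⟩
  -- B: transfer of minimality upward
  have lemB : ∀ F G : Set W, F ⊆ G → G ⊆ S → ∀ z, z ∈ MinSet le F →
      ∀ x, x ∈ MinSet le G → x ∈ F → z ∈ MinSet le G := by
    intro F G hFG hGS z hz x hx hxF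
    have hzS : z ∈ S := hGS (hFG hz.1)
    have hxS : x ∈ S := hGS hx.1
    have hzx : le z x := by
      rcases htot z hzS x hxS with h | h
      · exact h
      · by_contra hc
        exact hz.2 ⟨x, hxF, h, hc⟩
    refine ⟨hFG hz.1, fun ⟨y, hyG, hyz, hnzy⟩ => ?_⟩
    have hyS : y ∈ S := hGS hyG
    have hyx : le y x := htrans y hyS z hzS x hxS hyz hzx
    have hxy : le x y := by
      by_contra hc
      exact hx.2 ⟨y, hyG, hyx, hc⟩
    exact hnzy (htrans z hzS x hxS y hyS hzx hxy)
  intro a b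
  have hsub : ∀ t : Set W, (M ∪ MinSet le (tᶜ ∩ S)) ⊆ S := by
    intro t x hx
    rcases hx with hx | hx
    · exact hMS hx
    · exact hx.1.2
  refine ⟨hsub a, ?_, fun x hx => Or.inl hx, ?_, ?_, ?_, ?_⟩
  · -- success
    intro ⟨w, hwS, hwa⟩ hca
    obtain ⟨z, hz⟩ := hmin (aᶜ ∩ S) (fun x hx => hx.2) ⟨w, hwa, hwS⟩
    exact hz.1.1 (hca (Or.inr hz))
  · -- vacuity
    intro hMa
    obtain ⟨m, hmM, hma⟩ := Set.not_subset.mp hMa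
    apply Set.eq_of_subset_of_subset _ (fun x hx => Or.inl hx)
    rintro x (hx | hx)
    · exact hx
    · have hmMin : m ∈ MinSet le S := hfaith ▸ hmM
      have : x ∈ MinSet le S :=
        lemB (aᶜ ∩ S) S (fun y hy => hy.2) (le_refl S) x hx m hmMin ⟨hma, hMS hmM⟩
      exact hfaith ▸ this
  · -- recovery
    rintro x ⟨hx | hx, hxa⟩
    · exact hx
    · exact absurd hxa hx.1.1
  · -- conjunction 1
    rintro x (hx | hx)
    · exact Or.inl (Or.inl hx)
    · have hxS := hx.1.2
      have hnab : x ∉ a ∩ b := hx.1.1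
      by_cases hxa : x ∈ a
      · have hxb : x ∉ b := fun h => hnab ⟨hxa, h⟩
        exact Or.inr (Or.inr (lemA (bᶜ ∩ S) ((a ∩ b)ᶜ ∩ S)
          (fun y hy => ⟨fun h => hy.1 h.2, hy.2⟩) x hx ⟨hxb, hxS⟩))
      · exact Or.inl (Or.inr (lemA (aᶜ ∩ S) ((a ∩ b)ᶜ ∩ S)
          (fun y hy => ⟨fun h => hy.1 h.1, hy.2⟩) x hx ⟨hxa, hxS⟩))
  · -- conjunction 2
    intro hns
    obtain ⟨x, hxc, hxa⟩ := Set.not_subset.mp hns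
    have hFG : (aᶜ ∩ S) ⊆ ((a ∩ b)ᶜ ∩ S) := fun y hy => ⟨fun h => hy.1 h.1, hy.2⟩
    have hGS : ((a ∩ b)ᶜ ∩ S) ⊆ S := fun y hy => hy.2
    have hxS : x ∈ S := hsub (a ∩ b) hxc
    have hxMin : x ∈ MinSet le ((a ∩ b)ᶜ ∩ S) := by
      rcases hxc with hx | hx
      · have : x ∈ MinSet le S := hfaith ▸ hx
        exact lemA _ S hGS x this ⟨fun h => hxa h.1, hxS⟩
      · exact hx
    rintro z (hz | hz)
    · exact Or.inl hz
    · exact Or.inr (lemB (aᶜ ∩ S) ((a ∩ b)ᶜ ∩ S) hFG hGS z hz x hxMin ⟨hxa, hxS⟩)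
end

section
/- Assume M ⊆ S and M is nonempty, and let c : Set W → Set W satisfy the contraction postulates for (S,M). Then there exists a rational order ≤ for (S,M) such that c a = M ∪ Min((W \ a) ∩ S, ≤) for every sentence a ⊆ W. -/
/-- Any operator satisfying the contraction postulates arises from a rational order. -/
theorem rational_order_exists_for_contraction
    {W : Type*} (S M : Set W) (c : Set W → Set W)
    (hMS : M ⊆ S) (hMne : M.Nonempty)
    (hc : ContractionPostulates S M c) :
    ∃ le : W → W → Prop, RationalOrder le S M ∧
      ∀ a : Set W, c a = M ∪ MinSet le (aᶜ ∩ S) := by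
  have h1 : ∀ a : Set W, c a ⊆ S := fun a => (hc a a).1
  have h2 : ∀ a : Set W, (S \ a).Nonempty → ¬ c a ⊆ a := fun a => (hc a a).2.1
  have h3 : ∀ a : Set W, M ⊆ c a := fun a => (hc a a).2.2.1
  have h4 : ∀ a : Set W, ¬ M ⊆ a → c a = M := fun a => (hc a a).2.2.2.1
  have h5 : ∀ a : Set W, c a ∩ a ⊆ M := fun a => (hc a a).2.2.2.2.1
  have h7 : ∀ a b : Set W, c (a ∩ b) ⊆ c a ∪ c b := fun a b => (hc a b).2.2.2.2.2.1
  have h8 : ∀ a b : Set W, ¬ c (a ∩ b) ⊆ a → c a ⊆ c (a ∩ b) :=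
    fun a b => (hc a b).2.2.2.2.2.2
  set le : W → W → Prop := fun x y => x ∈ c (({x, y} : Set W)ᶜ) with hle
  have hsucc : ∀ (a : Set W) (x : W), x ∈ S → x ∉ a → ∃ w, w ∈ c a ∧ w ∉ a :=
    fun a x hx hxa => Set.not_subset.mp (h2 a ⟨x, hx, hxa⟩)
  have hid : ∀ (a : Set W) (x y : W), x ∉ a → y ∉ a →
      (({x, y} : Set W)ᶜ) ∩ (a ∪ {x, y}) = a := by
    intro a x y hx hy
    ext z
    simp only [Set.mem_inter_iff, Set.mem_compl_iff, Set.mem_union, Set.mem_insert_iff,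
      Set.mem_singleton_iff]
    constructor
    · rintro ⟨hn, (hz | hz)⟩
      · exact hz
      · exact absurd hz hn
    · intro hz
      refine ⟨?_, Or.inl hz⟩
      rintro (rfl | rfl)
      · exact hx hz
      · exact hy hz
  -- key "up" lemma
  have hup : ∀ (a : Set W) (x y : W), x ∉ a → y ∉ a → x ∈ c a →
      x ∈ c (({x, y} : Set W)ᶜ) := by
    intro a x y hx hy hxc
    have h := h7 (({x, y} : Set W)ᶜ) (a ∪ {x, y})
    rw [hid a x y hx hy] at h
    rcases h hxc with h | h
    · exact h
    · exact h3 _ (h5 _ ⟨h, Or.inr (Or.inl rfl)⟩)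
  have hpair : ∀ x y : W, (({x, y} : Set W)) = ({y, x} : Set W) := fun x y => Set.pair_comm x y
  refine ⟨le, ⟨?_, ?_, ?_, ?_, ?_⟩, ?_⟩
  · -- reflexive
    intro x hx
    obtain ⟨w, hwc, hwn⟩ := hsucc (({x, x} : Set W)ᶜ) x hx (by simp)
    have : w = x := by
      simp only [Set.mem_compl_iff, not_not, Set.mem_insert_iff, Set.mem_singleton_iff] at hwn
      tauto
    rwa [this] at hwc
  · -- transitive
    intro x hx y hy z hz hxy hyz
    have hidu1 : (({x, y} : Set W)ᶜ) ∩ ({z} : Set W)ᶜ = (({x, y, z} : Set W))ᶜ := by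
      ext w; simp only [Set.mem_inter_iff, Set.mem_compl_iff, Set.mem_insert_iff,
        Set.mem_singleton_iff]; tauto
    have hidu2 : (({y, z} : Set W)ᶜ) ∩ ({x} : Set W)ᶜ = (({x, y, z} : Set W))ᶜ := by
      ext w; simp only [Set.mem_inter_iff, Set.mem_compl_iff, Set.mem_insert_iff,
        Set.mem_singleton_iff]; tauto
    have hzx : y ∈ c ((({x, y, z} : Set W))ᶜ) → x ∈ c ((({x, y, z} : Set W))ᶜ) := by
      intro hyu
      have hns : ¬ c ((({x, y, z} : Set W))ᶜ) ⊆ (({x, y} : Set W))ᶜ := by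
        intro hsub
        exact (hsub hyu) (by simp)
      have := h8 (({x, y} : Set W)ᶜ) (({z} : Set W)ᶜ)
      rw [hidu1] at this
      exact this hns hxy
    have hzy : z ∈ c ((({x, y, z} : Set W))ᶜ) → y ∈ c ((({x, y, z} : Set W))ᶜ) := by
      intro hzu
      have hns : ¬ c ((({x, y, z} : Set W))ᶜ) ⊆ (({y, z} : Set W))ᶜ := by
        intro hsub
        exact (hsub hzu) (by simp)
      have := h8 (({y, z} : Set W)ᶜ) (({x} : Set W)ᶜ)
      rw [hidu2] at this
      exact this hns hyz
    have hxu : x ∈ c ((({x, y, z} : Set W))ᶜ) := by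
      obtain ⟨w, hwc, hwn⟩ := hsucc ((({x, y, z} : Set W))ᶜ) x hx (by simp)
      simp only [Set.mem_compl_iff, not_not, Set.mem_insert_iff, Set.mem_singleton_iff] at hwn
      rcases hwn with rfl | rfl | rfl
      · exact hwc
      · exact hzx hwc
      · exact hzx (hzy hwc)
    exact hup ((({x, y, z} : Set W))ᶜ) x z (by simp) (by simp) hxu
  · -- total
    intro x hx y hy
    obtain ⟨w, hwc, hwn⟩ := hsucc (({x, y} : Set W)ᶜ) x hx (by simp)
    simp only [Set.mem_compl_iff, not_not, Set.mem_insert_iff, Set.mem_singleton_iff] at hwn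
    rcases hwn with rfl | rfl
    · exact Or.inl hwc
    · right
      show w ∈ c (({w, x} : Set W)ᶜ)
      rwa [hpair w x]
  · -- faithfulness
    ext x
    simp only [MinSet, Set.mem_setOf_eq]
    constructor
    · rintro ⟨hxS, hmin⟩
      by_contra hxM
      obtain ⟨m, hm⟩ := hMne
      have hcM : c (({x, m} : Set W)ᶜ) = M := by
        apply h4
        intro hsub
        exact (hsub hm) (by simp)
      exact hmin ⟨m, hMS hm, h3 _ hm, by rw [hle]; simp only; rw [hcM]; exact hxM⟩
    · intro hxM
      refine ⟨hMS hxM, ?_⟩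
      rintro ⟨y, hyS, -, hnxy⟩
      exact hnxy (h3 _ hxM)
  · -- minimality
    intro F hFS ⟨x0, hx0⟩
    obtain ⟨w, hwc, hwn⟩ := hsucc Fᶜ x0 (hFS hx0) (by simpa using hx0)
    have hwF : w ∈ F := by simpa using hwn
    refine ⟨w, hwF, ?_⟩
    rintro ⟨y, hyF, -, hnwy⟩
    exact hnwy (hup Fᶜ w y hwn (by simpa using hyF) hwc)
  · -- representation
    intro a
    by_cases hSa : S ⊆ a
    · have hca : c a = M := Set.Subset.antisymm
        (fun x hx => h5 a ⟨hx, hSa (h1 a hx)⟩) (h3 a)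
      have hF : aᶜ ∩ S = ∅ := by
        ext z; simp only [Set.mem_inter_iff, Set.mem_compl_iff, Set.mem_empty_iff_false,
          iff_false, not_and]
        intro hz hzS; exact hz (hSa hzS)
      have : MinSet le (aᶜ ∩ S) = ∅ := by
        rw [hF]; ext z; simp [MinSet]
      rw [hca, this, Set.union_empty]
    · obtain ⟨x0, hx0S, hx0a⟩ := Set.not_subset.mp hSa
      apply Set.Subset.antisymm
      · intro x hx
        by_cases hxM : x ∈ M
        · exact Or.inl hxM
        right
        have hxS : x ∈ S := h1 a hx
        have hxa : x ∉ a := fun h => hxM (h5 a ⟨hx, h⟩)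
        refine ⟨⟨hxa, hxS⟩, ?_⟩
        rintro ⟨y, ⟨hya, hyS⟩, -, hnxy⟩
        exact hnxy (hup a x y hxa hya hx)
      · rintro x (hxM | ⟨⟨hxa, hxS⟩, hmin⟩)
        · exact h3 a hxM
        obtain ⟨w, hwc, hwa⟩ := hsucc a x0 hx0S hx0a
        have hwS : w ∈ S := h1 a hwc
        have hwlex : le w x := hup a w x hwa hxa hwc
        have hxlew : le x w := by
          by_contra hn
          exact hmin ⟨w, ⟨hwa, hwS⟩, hwlex, hn⟩
        have hns : ¬ c a ⊆ (({x, w} : Set W))ᶜ := fun hsub => (hsub hwc) (by simp)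
        have h := h8 (({x, w} : Set W)ᶜ) (a ∪ {x, w})
        rw [hid a x w hxa hwa] at h
        exact h hns hxlew
end

section
/- (Representation theorem for contraction.) Assume M ⊆ S and M is nonempty, and let c : Set W → Set W. Then c satisfies the contraction postulates for (S,M) if and only if there exists a rational order ≤ for (S,M) such that c a = M ∪ Min((W \ a) ∩ S, ≤) for every sentence a ⊆ W. -/
namespace ContractionRepAux

variable {W : Type*} {S M : Set W} {c : Set W → Set W}

lemma subset_pair_compl {a : Set W} {x y : W} (hx : x ∉ a) (hy : y ∉ a) :
    a ⊆ ({x, y} : Set W)ᶜ := by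
  intro w hw h
  rcases h with h | h
  · exact hx (h ▸ hw)
  · exact hy ((Set.mem_singleton_iff.mp h) ▸ hw)

lemma inter_trick (a : Set W) {x y : W} (hx : x ∉ a) (hy : y ∉ a) :
    (({x, y} : Set W)ᶜ) ∩ (a ∪ {x, y}) = a := by
  ext w
  simp only [Set.mem_inter_iff, Set.mem_compl_iff, Set.mem_union, Set.mem_insert_iff,
    Set.mem_singleton_iff]
  constructor
  · rintro ⟨hn, h | h⟩
    · exact h
    · exact absurd h hn
  · intro hw
    refine ⟨?_, Or.inl hw⟩
    rintro (rfl | rfl)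
    · exact hx hw
    · exact hy hw

lemma key1 (hC : ContractionPostulates S M c) {a : Set W} {x y : W}
    (hxc : x ∈ c a) (hx : x ∉ a) (hy : y ∉ a) :
    x ∈ c (({x, y} : Set W)ᶜ) ∨ x ∈ M := by
  have h6 := (hC (({x, y} : Set W)ᶜ) (a ∪ {x, y})).2.2.2.2.2.1
  rw [inter_trick a hx hy] at h6
  rcases h6 hxc with h | h
  · exact Or.inl h
  · exact Or.inr ((hC (a ∪ {x, y}) a).2.2.2.2.1 ⟨h, Or.inr (Or.inl rfl)⟩)

lemma key2 (hC : ContractionPostulates S M c) {a b : Set W} {z : W}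
    (hz : z ∈ c a) (hzb : z ∉ b) (hab : a ⊆ b) : c b ⊆ c a := by
  have h7 := (hC b a).2.2.2.2.2.2
  rw [Set.inter_eq_right.mpr hab] at h7
  exact h7 (fun hsub => hzb (hsub hz))

lemma succ (hC : ContractionPostulates S M c) {a : Set W} (h : (S \ a).Nonempty) :
    ∃ z, z ∈ c a ∧ z ∉ a :=
  Set.not_subset.mp ((hC a a).2.1 h)

end ContractionRepAux

open ContractionRepAux in
/-- Representation theorem for contraction. -/
theorem contraction_representation
    {W : Type*} (S M : Set W) (c : Set W → Set W)
    (hMS : M ⊆ S) (hMne : M.Nonempty) :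
    ContractionPostulates S M c ↔
      ∃ le : W → W → Prop, RationalOrder le S M ∧
        ∀ a : Set W, c a = M ∪ MinSet le (aᶜ ∩ S) := by
  constructor
  · -- Forward direction: postulates imply representation
    intro hC
    have p1 : ∀ a : Set W, c a ⊆ S := fun a => (hC a a).1
    have p3 : ∀ a : Set W, M ⊆ c a := fun a => (hC a a).2.2.1
    have p4 : ∀ a : Set W, ¬ M ⊆ a → c a = M := fun a => (hC a a).2.2.2.1
    have p5 : ∀ a : Set W, c a ∩ a ⊆ M := fun a => (hC a a).2.2.2.2.1
    set le : W → W → Prop := fun x y => x ∈ c (({x, y} : Set W)ᶜ) with hle_def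
    -- reflexivity
    have hrefl : ∀ x ∈ S, le x x := by
      intro x hxS
      have hpair : ({x, x} : Set W) = {x} := by simp
      obtain ⟨z, hz, hz2⟩ := succ hC (a := ({x} : Set W)ᶜ)
        ⟨x, hxS, by simp⟩
      have : z = x := by simpa using hz2
      show x ∈ c (({x, x} : Set W)ᶜ)
      rw [hpair]
      exact this ▸ hz
    -- totality
    have htotal : ∀ x ∈ S, ∀ y ∈ S, le x y ∨ le y x := by
      intro x hxS y hyS
      obtain ⟨z, hz, hz2⟩ := succ hC (a := ({x, y} : Set W)ᶜ)
        ⟨x, hxS, by simp⟩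
      have hz3 : z = x ∨ z = y := by
        have := hz2; simp only [Set.mem_compl_iff, Set.mem_insert_iff,
          Set.mem_singleton_iff, not_and, not_not] at this
        tauto
      rcases hz3 with rfl | rfl
      · exact Or.inl hz
      · right
        show z ∈ c (({z, x} : Set W)ᶜ)
        rwa [Set.pair_comm z x]
    -- transitivity
    have htrans : ∀ x ∈ S, ∀ y ∈ S, ∀ z ∈ S, le x y → le y z → le x z := by
      intro x hxS y hyS z hzS hxy hyz
      set A : Set W := {x, y, z} with hA
      have hxA : x ∈ A := Or.inl rfl
      have hyA : y ∈ A := Or.inr (Or.inl rfl)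
      have hzA : z ∈ A := Or.inr (Or.inr rfl)
      have case_x : x ∈ c Aᶜ → le x z := by
        intro hx
        rcases key1 hC hx (by simpa using hxA) (by simpa using hzA) with h | h
        · exact h
        · exact p3 _ h
      have case_y : y ∈ c Aᶜ → x ∈ c Aᶜ := by
        intro hy
        have hsub : Aᶜ ⊆ ({x, y} : Set W)ᶜ :=
          Set.compl_subset_compl.mpr (by
            intro w hw; simp only [Set.mem_insert_iff, Set.mem_singleton_iff] at hw ⊢; tauto)
        exact key2 hC hy (by simp) hsub hxy
      have case_z : z ∈ c Aᶜ → y ∈ c Aᶜ := by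
        intro hz
        have hsub : Aᶜ ⊆ ({y, z} : Set W)ᶜ :=
          Set.compl_subset_compl.mpr (by
            intro w hw; simp only [Set.mem_insert_iff, Set.mem_singleton_iff] at hw ⊢; tauto)
        exact key2 hC hz (by simp) hsub hyz
      obtain ⟨w, hw, hw2⟩ := succ hC (a := Aᶜ) ⟨x, hxS, by simpa using hxA⟩
      have hwA : w ∈ A := by simpa using hw2
      rcases hwA with rfl | rfl | rfl
      · exact case_x hw
      · exact case_x (case_y hw)
      · exact case_x (case_y (case_z hw))
    -- faithfulness
    have hfaith : MinSet le S = M := by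
      apply Set.Subset.antisymm
      · rintro x ⟨hxS, hmin⟩
        by_contra hxM
        obtain ⟨m, hm⟩ := hMne
        apply hmin
        refine ⟨m, hMS hm, p3 _ hm, fun h => hxM ?_⟩
        have hne : ¬ M ⊆ (({x, m} : Set W)ᶜ) := by
          intro hsub
          exact (hsub hm) (Or.inr rfl)
        have h' : x ∈ c (({x, m} : Set W)ᶜ) := h
        rw [p4 _ hne] at h'
        exact h'
      · intro m hm
        exact ⟨hMS hm, fun ⟨y, hyS, hle, hnle⟩ => hnle (p3 _ hm)⟩
    -- minimality
    have hminim : ∀ F ⊆ S, F.Nonempty → (MinSet le F).Nonempty := by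
      intro F hFS ⟨x0, hx0⟩
      obtain ⟨w, hw, hw2⟩ := succ hC (a := Fᶜ) ⟨x0, hFS hx0, by simpa using hx0⟩
      have hwF : w ∈ F := by simpa using hw2
      refine ⟨w, hwF, fun ⟨y, hyF, hle, hnle⟩ => ?_⟩
      rcases key1 hC hw (by simpa using hwF) (by simpa using hyF) with h | h
      · exact hnle h
      · exact hnle (p3 _ h)
    refine ⟨le, ⟨hrefl, htrans, htotal, hfaith, hminim⟩, ?_⟩
    -- representation formula
    intro a
    by_cases hSa : S ⊆ a
    · have hF : aᶜ ∩ S = ∅ := by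
        ext w; simp only [Set.mem_inter_iff, Set.mem_compl_iff, Set.mem_empty_iff_false,
          iff_false, not_and]
        intro hwa hwS; exact hwa (hSa hwS)
      have hMin : MinSet le (aᶜ ∩ S) = ∅ := by
        rw [hF]; ext w; simp [MinSet]
      rw [hMin, Set.union_empty]
      apply Set.Subset.antisymm
      · intro x hx
        exact p5 a ⟨hx, hSa (p1 a hx)⟩
      · exact p3 a
    · obtain ⟨w0, hw0S, hw0a⟩ := Set.not_subset.mp hSa
      obtain ⟨z, hzc, hza⟩ := succ hC (a := a) ⟨w0, hw0S, hw0a⟩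
      have hzS : z ∈ S := p1 a hzc
      apply Set.Subset.antisymm
      · intro x hx
        by_cases hxa : x ∈ a
        · exact Or.inl (p5 a ⟨hx, hxa⟩)
        by_cases hxM : x ∈ M
        · exact Or.inl hxM
        refine Or.inr ⟨⟨hxa, p1 a hx⟩, fun ⟨y, ⟨hya, hyS⟩, hle', hnle⟩ => ?_⟩
        rcases key1 hC hx hxa hya with h | h
        · exact hnle h
        · exact hxM h
      · rintro x (hxM | ⟨⟨hxa, hxS⟩, hmin⟩)
        · exact p3 a hxM
        have hxz : le x z := by
          by_cases h : le x z
          · exact h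
          rcases htotal x hxS z hzS with h' | h'
          · exact h'
          · exact absurd ⟨z, ⟨hza, hzS⟩, h', h⟩ hmin
        exact key2 hC hzc (by simp) (subset_pair_compl hxa hza) hxz
  · -- Backward direction: representation implies postulates
    rintro ⟨le, ⟨hrefl, htrans, htotal, hfaith, hminim⟩, hc⟩
    have hMinS : ∀ a : Set W, MinSet le (aᶜ ∩ S) ⊆ S := fun a x hx => hx.1.2
    have hminM : ∀ a : Set W, ¬ M ⊆ a → MinSet le (aᶜ ∩ S) ⊆ M := by
      intro a hMa x hx
      obtain ⟨m0, hm0M, hm0a⟩ := Set.not_subset.mp hMa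
      obtain ⟨⟨hxa, hxS⟩, hxmin⟩ := hx
      have hm0S : m0 ∈ S := hMS hm0M
      have hm0F : m0 ∈ aᶜ ∩ S := ⟨hm0a, hm0S⟩
      have hm0min : m0 ∈ MinSet le S := by rw [hfaith]; exact hm0M
      have hxm0 : le x m0 := by
        by_cases h : le x m0
        · exact h
        rcases htotal x hxS m0 hm0S with h' | h'
        · exact h'
        · exact absurd ⟨m0, hm0F, h', h⟩ hxmin
      rw [← hfaith]
      refine ⟨hxS, fun ⟨y, hyS, hle', hnle⟩ => ?_⟩
      exact hm0min.2 ⟨y, hyS, htrans y hyS x hxS m0 hm0S hle' hxm0,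
        fun h => hnle (htrans x hxS m0 hm0S y hyS hxm0 h)⟩
    intro a b
    refine ⟨?_, ?_, ?_, ?_, ?_, ?_, ?_⟩
    · rw [hc]; exact Set.union_subset hMS (hMinS a)
    · rintro ⟨w0, hw0S, hw0a⟩ hsub
      obtain ⟨w, hw⟩ := hminim (aᶜ ∩ S) Set.inter_subset_right ⟨w0, hw0a, hw0S⟩
      exact hw.1.1 (hsub (hc a ▸ Or.inr hw))
    · rw [hc]; exact Set.subset_union_left
    · intro hMa
      rw [hc]
      exact Set.union_eq_left.mpr (hminM a hMa)
    · rw [hc]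
      rintro x ⟨hxM | hxmin, hxa⟩
      · exact hxM
      · exact absurd hxa hxmin.1.1
    · rw [hc, hc, hc]
      rintro x (hxM | hxmin)
      · exact Or.inl (Or.inl hxM)
      have hxS : x ∈ S := hxmin.1.2
      have hxab : x ∉ a ∩ b := hxmin.1.1
      have key : ∀ p : Set W, a ∩ b ⊆ p → x ∉ p → x ∈ MinSet le (pᶜ ∩ S) := by
        intro p hp hxp
        refine ⟨⟨hxp, hxS⟩, fun ⟨y, ⟨hyp, hyS⟩, hle', hnle⟩ => ?_⟩
        exact hxmin.2 ⟨y, ⟨fun hy => hyp (hp hy), hyS⟩, hle', hnle⟩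
      by_cases hxa : x ∈ a
      · have hxb : x ∉ b := fun h => hxab ⟨hxa, h⟩
        exact Or.inr (Or.inr (key b Set.inter_subset_right hxb))
      · exact Or.inl (Or.inr (key a Set.inter_subset_left hxa))
    · intro hn
      obtain ⟨x, hxab, hxa⟩ := Set.not_subset.mp hn
      rw [hc] at hxab
      rw [hc, hc]
      rcases hxab with hxM | hxmin
      · have hMa : ¬ M ⊆ a := fun h => hxa (h hxM)
        rintro w (hwM | hw)
        · exact Or.inl hwM
        · exact Or.inl (hminM a hMa hw)
      · have hxS : x ∈ S := hxmin.1.2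
        rintro w (hwM | hwmin)
        · exact Or.inl hwM
        have hwS : w ∈ S := hwmin.1.2
        have hwa : w ∉ a := hwmin.1.1
        refine Or.inr ⟨⟨fun h => hwa h.1, hwS⟩, fun ⟨y, ⟨hyab, hyS⟩, hle', hnle⟩ => ?_⟩
        by_cases hya : y ∈ a
        · have hwx : le w x := by
            by_cases h : le w x
            · exact h
            rcases htotal w hwS x hxS with h' | h'
            · exact h'
            · exact absurd ⟨x, ⟨hxa, hxS⟩, h', h⟩ hwmin.2
          exact hxmin.2 ⟨y, ⟨hyab, hyS⟩, htrans y hyS w hwS x hxS hle' hwx,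
            fun h => hnle (htrans w hwS x hxS y hyS hwx h)⟩
        · exact hwmin.2 ⟨y, ⟨hya, hyS⟩, hle', hnle⟩
end

section
/- Assume IC is empty, so S = W, and let M ⊆ W be the set of models of KB. Let r : Set W → Set W satisfy the revision postulates for (W,M), and let B = {p ⊆ W : M ⊆ p} be the belief set of KB. Define * : Set W → Set (Set W) by * a = {p ⊆ W : r a ⊆ p}. Then * satisfies the AGM revision postulates for B, i.e. (*1)–(*5), (*7) and (*8) all hold. -/
/-- The consequence operator: sentences true in every common model of `X`. -/
def Cn {W : Type*} (X : Set (Set W)) : Set (Set W) := {p | ⋂₀ X ⊆ p}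

/-- AGM expansion of a set of sentences `X` by a sentence `a`. -/
def Exp {W : Type*} (X : Set (Set W)) (a : Set W) : Set (Set W) := Cn (X ∪ {a})

/-- `star` satisfies the AGM revision postulates for belief set `B`. -/
def AGMRevisionPostulates {W : Type*} (B : Set (Set W))
    (star : Set W → Set (Set W)) : Prop :=
  ∀ a b : Set W,
    star a = Cn (star a) ∧
    a ∈ star a ∧
    star a ⊆ Exp B a ∧
    (aᶜ ∉ B → Exp B a ⊆ star a) ∧
    ((∅ : Set W) ∈ star a ↔ a = ∅) ∧
    star (a ∩ b) ⊆ Exp (star a) b ∧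
    (bᶜ ∉ star a → Exp (star a) b ⊆ star (a ∩ b))

lemma sInter_up {W : Type*} (s : Set W) : ⋂₀ {p : Set W | s ⊆ p} = s := by
  apply subset_antisymm
  · exact Set.sInter_subset_of_mem (by simp [Set.mem_setOf_eq])
  · intro x hx p hp; exact hp hx

/-- A rational model-level revision induces an AGM revision on belief sets
(when `IC` is empty, i.e. `S = W`). -/
theorem revision_induces_AGM_revision
    {W : Type*} (M : Set W) (r : Set W → Set W)
    (hr : RevisionPostulates Set.univ M r) :
    AGMRevisionPostulates {p : Set W | M ⊆ p}
      (fun a => {p : Set W | r a ⊆ p}) := by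
  intro a b
  obtain ⟨_, h2, h3, h4, h6, h7⟩ := hr a b
  obtain ⟨_, _, h3ab, _, _, _⟩ := hr (a ∩ b) b
  have hMa : M ∩ a ⊆ r a := by
    rcases (M ∩ a).eq_empty_or_nonempty with h | h
    · simp [h]
    · rw [h4 h]
  have hB : ⋂₀ ({p : Set W | M ⊆ p} ∪ {a}) = M ∩ a := by
    rw [Set.sInter_union, Set.sInter_singleton, sInter_up]
  have hSa : ⋂₀ ({p : Set W | r a ⊆ p} ∪ {b}) = r a ∩ b := by
    rw [Set.sInter_union, Set.sInter_singleton, sInter_up]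
  refine ⟨?_, h2, ?_, ?_, ?_, ?_, ?_⟩
  · simp only [Cn, sInter_up]
  · intro p hp
    simp only [Exp, Cn, Set.mem_setOf_eq, hB] at *
    exact (hMa.trans hp)
  · intro hc p hp
    simp only [Set.mem_setOf_eq] at hc ⊢
    simp only [Exp, Cn, Set.mem_setOf_eq, hB] at hp
    have hne : (M ∩ a).Nonempty := by
      rcases Set.not_subset.mp (fun h => hc h) with ⟨x, hxM, hxa⟩
      exact ⟨x, hxM, not_not.mp hxa⟩
    rw [h4 hne]; exact hp
  · simp only [Set.mem_setOf_eq, Set.subset_empty_iff]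
    constructor
    · intro h
      by_contra ha
      have := h3.mp (by simpa using Set.nonempty_iff_ne_empty.mpr ha)
      rw [h] at this; exact this.ne_empty rfl
    · intro h
      by_contra hne
      have := h3.mpr (Set.nonempty_iff_ne_empty.mpr hne)
      simp [h] at this
  · intro p hp
    simp only [Set.mem_setOf_eq] at hp
    simp only [Exp, Cn, Set.mem_setOf_eq, hSa]
    exact h6.trans hp
  · intro hc p hp
    simp only [Set.mem_setOf_eq] at hc ⊢
    simp only [Exp, Cn, Set.mem_setOf_eq, hSa] at hp
    have hne : (r a ∩ b).Nonempty := by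
      rcases Set.not_subset.mp (fun h => hc h) with ⟨x, hx, hxb⟩
      exact ⟨x, hx, not_not.mp hxb⟩
    exact (h7 hne).trans hp
end

section
/- Assume IC is empty, so S = W, and let M ⊆ W be the set of models of KB with belief set B = {p ⊆ W : M ⊆ p}. Let * : Set W → Set (Set W) satisfy the AGM revision postulates for B. Define r : Set W → Set W by r a = ⋂₀ (* a) (the intersection of all sentences in * a). Then r satisfies the revision postulates for (W,M). -/
lemma sInter_Cn {W : Type*} (X : Set (Set W)) : ⋂₀ Cn X = ⋂₀ X := by
  apply subset_antisymm
  · exact Set.sInter_subset_sInter (fun p hp => Set.sInter_subset_of_mem hp)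
  · intro x hx p hp
    exact hp hx

lemma sInter_Exp {W : Type*} (X : Set (Set W)) (a : Set W) :
    ⋂₀ Exp X a = ⋂₀ X ∩ a := by
  rw [Exp, sInter_Cn, Set.sInter_union, Set.sInter_singleton]

/-- An AGM revision on belief sets induces a rational model-level revision
(when `IC` is empty, i.e. `S = W`). -/
theorem AGM_revision_induces_revision
    {W : Type*} (M : Set W) (star : Set W → Set (Set W))
    (hstar : AGMRevisionPostulates {p : Set W | M ⊆ p} star) :
    RevisionPostulates Set.univ M (fun a => ⋂₀ (star a)) := by
  set B : Set (Set W) := {p : Set W | M ⊆ p} with hB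
  have mem_star : ∀ a p, p ∈ star a ↔ ⋂₀ star a ⊆ p := by
    intro a p
    constructor
    · intro hp; exact Set.sInter_subset_of_mem hp
    · intro hp
      have h1 := (hstar a a).1
      rw [h1]; exact hp
  intro a b
  have ha := hstar a b
  refine ⟨fun x _ => trivial, ?_, ?_, ?_, ?_, ?_⟩
  · -- success
    exact Set.sInter_subset_of_mem ha.2.1
  · -- consistency
    rw [Set.inter_univ]
    have h5 := ha.2.2.2.2.1
    rw [mem_star] at h5
    simp only [Set.nonempty_iff_ne_empty]
    constructor
    · intro hne h
      exact hne (h5.mp (le_of_eq h))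
    · intro hne h
      exact hne (Set.subset_empty_iff.mp (h5.mpr h))
  · -- vacuity
    intro hMa
    have hac : aᶜ ∉ B := by
      intro hc
      obtain ⟨x, hxM, hxa⟩ := hMa
      exact hc hxM hxa
    have h3 := ha.2.2.1
    have h4 := ha.2.2.2.1 hac
    have heq : star a = Exp B a := subset_antisymm h3 h4
    have : ⋂₀ star a = ⋂₀ B ∩ a := by rw [heq, sInter_Exp]
    have hBM : ⋂₀ B = M := by
      apply subset_antisymm
      · exact Set.sInter_subset_of_mem (by simp [hB])
      · intro x hx p hp
        exact hp hx
    simpa [hBM] using this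
  · -- (∔6)
    have h7 := ha.2.2.2.2.2.1
    have : ⋂₀ Exp (star a) b ⊆ ⋂₀ star (a ∩ b) :=
      Set.sInter_subset_sInter h7
    rw [sInter_Exp] at this
    exact this
  · -- (∔7)
    intro hne
    have hbc : bᶜ ∉ star a := by
      rw [mem_star]
      intro hc
      obtain ⟨x, hx1, hx2⟩ := hne
      exact hc hx1 hx2
    have h8 := ha.2.2.2.2.2.2 hbc
    have : ⋂₀ star (a ∩ b) ⊆ ⋂₀ Exp (star a) b :=
      Set.sInter_subset_sInter h8
    rw [sInter_Exp] at this
    exact this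
end

section
/- Assume IC is empty, so S = W, and let M ⊆ W be the set of models of KB with belief set B = {p ⊆ W : M ⊆ p}. Let c : Set W → Set W satisfy the contraction postulates for (W,M). Define ⊖ : Set W → Set (Set W) by ⊖ a = {p ⊆ W : c a ⊆ p}. Then ⊖ satisfies the AGM contraction postulates for B, i.e. (−1)–(−4), (−6), (−7) and (−8) all hold. -/
/-- `om` satisfies the AGM contraction postulates for belief set `B`. -/
def AGMContractionPostulates {W : Type*} (B : Set (Set W))
    (om : Set W → Set (Set W)) : Prop :=
  ∀ a b : Set W,
    om a = Cn (om a) ∧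
    om a ⊆ B ∧
    (a ∉ B → om a = B) ∧
    (a ≠ Set.univ → a ∉ om a) ∧
    B ⊆ Exp (om a) a ∧
    om a ∩ om b ⊆ om (a ∩ b) ∧
    (a ∉ om (a ∩ b) → om (a ∩ b) ⊆ om a)

/-- A rational model-level contraction induces an AGM contraction on belief sets
(when `IC` is empty, i.e. `S = W`). -/
theorem contraction_induces_AGM_contraction
    {W : Type*} (M : Set W) (c : Set W → Set W)
    (hc : ContractionPostulates Set.univ M c) :
    AGMContractionPostulates {p : Set W | M ⊆ p}
      (fun a => {p : Set W | c a ⊆ p}) := by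
  have key : ∀ a : Set W, ⋂₀ {p : Set W | c a ⊆ p} = c a := by
    intro a
    apply subset_antisymm
    · exact Set.sInter_subset_of_mem (le_refl (c a))
    · exact fun x hx p hp => hp hx
  intro a b
  obtain ⟨_, hsucc, hincl, hvac, hrec, hconj1, hconj2⟩ := hc a b
  refine ⟨?_, ?_, ?_, ?_, ?_, ?_, ?_⟩
  · ext p; simp only [Cn, Set.mem_setOf_eq, key]
  · exact fun p hp => hincl.trans hp
  · intro ha
    have : ¬ M ⊆ a := ha
    simp only [hvac this]
  · intro ha hmem
    exact hsucc (by
      rcases Set.ne_univ_iff_exists_notMem a |>.mp ha with ⟨x, hx⟩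
      exact ⟨x, Set.mem_univ x, hx⟩) hmem
  · intro p hp
    simp only [Exp, Cn, Set.mem_setOf_eq, Set.sInter_union, Set.sInter_singleton, key]
    exact fun x hx => hp (hrec hx)
  · intro p hp
    exact fun x hx => (hconj1 hx).elim (fun h => hp.1 h) (fun h => hp.2 h)
  · intro ha p hp
    exact (hconj2 ha).trans hp
end

section
/- Assume IC is empty, so S = W, and let M ⊆ W be the set of models of KB with belief set B = {p ⊆ W : M ⊆ p}. Let ⊖ : Set W → Set (Set W) satisfy the AGM contraction postulates for B. Define c : Set W → Set W by c a = ⋂₀ (⊖ a) (the intersection of all sentences in ⊖ a). Then c satisfies the contraction postulates for (W,M). -/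
/-- An AGM contraction on belief sets induces a rational model-level contraction
(when `IC` is empty, i.e. `S = W`). -/
theorem AGM_contraction_induces_contraction
    {W : Type*} (M : Set W) (om : Set W → Set (Set W))
    (hom : AGMContractionPostulates {p : Set W | M ⊆ p} om) :
    ContractionPostulates Set.univ M (fun a => ⋂₀ (om a)) := by
  -- key: membership characterization via closure
  have mem_iff : ∀ a p : Set W, p ∈ om a ↔ ⋂₀ om a ⊆ p := by
    intro a p
    constructor
    · intro hp; exact Set.sInter_subset_of_mem hp
    · intro hp
      have h1 := (hom a a).1
      rw [h1]; exact hp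
  have hM : ∀ a, M ⊆ ⋂₀ om a := by
    intro a
    apply Set.subset_sInter
    intro p hp
    exact (hom a a).2.1 hp
  intro a b
  refine ⟨by simp, ?_, hM a, ?_, ?_, ?_, ?_⟩
  · -- success
    rintro ⟨x, -, hxa⟩ hsub
    have hne : a ≠ Set.univ := by
      intro h; exact hxa (h ▸ Set.mem_univ x)
    exact (hom a a).2.2.2.1 hne ((mem_iff a a).2 hsub)
  · -- vacuity
    intro hMa
    have : a ∉ {p : Set W | M ⊆ p} := hMa
    have heq := (hom a a).2.2.1 this
    simp only [heq]
    apply subset_antisymm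
    · exact Set.sInter_subset_of_mem (by simp : M ∈ {p : Set W | M ⊆ p})
    · exact Set.subset_sInter fun p hp => hp
  · -- recovery
    have hrec := (hom a a).2.2.2.2.1
    have hMmem : M ∈ {p : Set W | M ⊆ p} := by simp
    have := hrec hMmem
    have h2 : ⋂₀ (om a ∪ {a}) ⊆ M := this
    intro x hx
    apply h2
    intro p hp
    rcases hp with hp | hp
    · exact hx.1 p hp
    · rw [Set.mem_singleton_iff] at hp; exact hp ▸ hx.2
  · -- conjunction 1
    have h1 : (⋂₀ om a ∪ ⋂₀ om b) ∈ om a :=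
      (mem_iff a _).2 Set.subset_union_left
    have h2 : (⋂₀ om a ∪ ⋂₀ om b) ∈ om b :=
      (mem_iff b _).2 Set.subset_union_right
    exact Set.sInter_subset_of_mem ((hom a b).2.2.2.2.2.1 ⟨h1, h2⟩)
  · -- conjunction 2
    intro hna
    have : a ∉ om (a ∩ b) := fun h => hna ((mem_iff (a ∩ b) a).1 h)
    have hsub := (hom a b).2.2.2.2.2.2 this
    exact Set.sInter_subset_sInter hsub
end

section
/- (Models of the disjunction of two explanations.) Let Δ₁ and Δ₂ be two sets of sentences (in the paper, two minimal abductive explanations for a sentence α with respect to KB). Define their disjunction Δ₁ ∨ Δ₂ = (Δ₁ ∩ Δ₂) ∪ { x ∪ y : x ∈ Δ₁ \ Δ₂, y ∈ Δ₂ \ Δ₁ } (the union x ∪ y of two sentences being the disjunction of the sentences). Then the models of Δ₁ ∨ Δ₂ are exactly the models of Δ₁ together with the models of Δ₂: ⋂₀ (Δ₁ ∨ Δ₂) = (⋂₀ Δ₁) ∪ (⋂₀ Δ₂). -/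
/-- The disjunction of two sets of sentences (abductive explanations). -/
def disjExpl {W : Type*} (D₁ D₂ : Set (Set W)) : Set (Set W) :=
  (D₁ ∩ D₂) ∪ {s | ∃ x ∈ D₁ \ D₂, ∃ y ∈ D₂ \ D₁, s = x ∪ y}

/-- The models of the disjunction of two explanations are exactly the models of
the first together with the models of the second. -/
theorem models_of_disjunction
    {W : Type*} (D₁ D₂ : Set (Set W)) :
    ⋂₀ (disjExpl D₁ D₂) = (⋂₀ D₁) ∪ (⋂₀ D₂) := by
  ext w
  simp only [Set.mem_sInter, Set.mem_union]
  constructor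
  · intro h
    by_contra hc
    push_neg at hc
    obtain ⟨⟨a, ha, hwa⟩, ⟨b, hb, hwb⟩⟩ := by
      simpa only [Set.mem_sInter, not_forall] using hc
    by_cases ha2 : a ∈ D₂
    · exact hwa (h a (Or.inl ⟨ha, ha2⟩))
    by_cases hb1 : b ∈ D₁
    · exact hwb (h b (Or.inl ⟨hb1, hb⟩))
    · have := h (a ∪ b) (Or.inr ⟨a, ⟨ha, ha2⟩, b, ⟨hb, hb1⟩, rfl⟩)
      rcases this with h | h
      · exact hwa h
      · exact hwb h
  · rintro (h | h) s (⟨hs1, _⟩ | ⟨x, ⟨hx, _⟩, y, ⟨hy, _⟩, rfl⟩)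
    · exact h s hs1
    · exact Or.inl (h x hx)
    · exact h s ‹_›
    · exact Or.inr (h y hy)
end

section
/- Assume M ⊆ S and M is nonempty (KB is consistent). Let a ⊆ W be a sentence that is rejected in KB, i.e. M ∩ a = ∅, and let X be any nonempty subset of a ∩ S (in the paper, X = Mod(KB ∔ α) is a nonempty subset of Mod(∨Δ•) = Mod({α} ∪ IC), where Δ• is the set of all minimal abductive explanations for α with respect to KB). Then there exists a rational order ≤ for (S,M) such that Min(a ∩ S, ≤) = X. -/
/-- Revision of `KB` by a rejected sentence can be realized by any nonempty
subset of the models of `{α} ∪ IC`. -/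
theorem rational_order_for_rejected_revision
    {W : Type*} (S M a X : Set W)
    (hMS : M ⊆ S) (hMne : M.Nonempty)
    (hrej : M ∩ a = ∅)
    (hX : X ⊆ a ∩ S) (hXne : X.Nonempty) :
    ∃ le : W → W → Prop, RationalOrder le S M ∧ MinSet le (a ∩ S) = X := by
  classical
  set rk : W → ℕ := fun w => if w ∈ M then 0 else if w ∈ X then 1 else 2 with hrk
  have key : ∀ F : Set W, MinSet (fun x y => rk x ≤ rk y) F
      = {x | x ∈ F ∧ ∀ y ∈ F, rk x ≤ rk y} := by
    intro F
    ext x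
    simp only [MinSet, Set.mem_setOf_eq]
    constructor
    · rintro ⟨hxF, h⟩
      refine ⟨hxF, fun y hy => ?_⟩
      by_contra hlt
      exact h ⟨y, hy, le_of_not_ge hlt, hlt⟩
    · rintro ⟨hxF, h⟩
      exact ⟨hxF, fun ⟨y, hy, _, hnot⟩ => hnot (h y hy)⟩
  have minne : ∀ F : Set W, F.Nonempty →
      (MinSet (fun x y => rk x ≤ rk y) F).Nonempty := by
    intro F ⟨w, hw⟩
    obtain ⟨n, ⟨x, hxF, rfl⟩, hmin⟩ :=
      (Nat.lt_wfRel.wf).has_min (rk '' F) ⟨rk w, w, hw, rfl⟩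
    refine ⟨x, ?_⟩
    rw [key]
    exact ⟨hxF, fun y hy => le_of_not_gt fun h => hmin (rk y) ⟨y, hy, rfl⟩ h⟩
  refine ⟨fun x y => rk x ≤ rk y, ⟨fun x _ => le_refl _, fun x _ y _ z _ => le_trans,
    fun x _ y _ => le_total _ _, ?_, fun F _ hne => minne F hne⟩, ?_⟩
  · -- MinSet S = M
    rw [key]
    ext x
    simp only [Set.mem_setOf_eq]
    constructor
    · rintro ⟨hxS, h⟩
      by_contra hxM
      obtain ⟨m, hm⟩ := hMne
      have := h m (hMS hm)
      simp only [hrk, if_pos hm, if_neg hxM] at this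
      split_ifs at this <;> omega
    · intro hxM
      refine ⟨hMS hxM, fun y _ => ?_⟩
      simp only [hrk, if_pos hxM]
      exact Nat.zero_le _
  · -- MinSet (a ∩ S) = X
    rw [key]
    ext x
    simp only [Set.mem_setOf_eq]
    have hnoM : ∀ y ∈ a ∩ S, y ∉ M := by
      intro y hy hyM
      exact absurd (Set.mem_inter hyM hy.1) (by rw [hrej]; exact id)
    constructor
    · rintro ⟨hxF, h⟩
      by_contra hxX
      obtain ⟨x0, hx0⟩ := hXne
      have := h x0 (hX hx0)
      simp only [hrk, if_neg (hnoM x hxF), if_neg hxX,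
        if_neg (hnoM x0 (hX hx0)), if_pos hx0] at this
      omega
    · intro hxX
      refine ⟨hX hxX, fun y hy => ?_⟩
      simp only [hrk, if_neg (hnoM x (hX hxX)), if_pos hxX, if_neg (hnoM y hy)]
      split_ifs <;> omega
end

section
/- Assume M ⊆ S and M is nonempty (KB is consistent). Let a ⊆ W be a sentence that is rejected in KB, i.e. M ∩ a = ∅, let D ⊆ a ∩ S (in the paper, D = Mod(Δ) for a single abductive explanation Δ for α with respect to KB, so that D is contained in Mod({α} ∪ IC)), and let X be any nonempty subset of D. Then there exists a rational order ≤ for (S,M) such that Min(a ∩ S, ≤) = X. Hence revision of KB by a rejected sentence α can be realized by computing just one abductive explanation of α with respect to KB. -/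
/-- Revision of `KB` by a rejected sentence can be realized by computing just
one abductive explanation: any nonempty subset `X` of the models `D` of a single
abductive explanation can serve as the set of models of the revision. -/
theorem rational_order_for_single_explanation_revision
    {W : Type*} (S M a D X : Set W)
    (hMS : M ⊆ S) (hMne : M.Nonempty)
    (hrej : M ∩ a = ∅)
    (hD : D ⊆ a ∩ S) (hX : X ⊆ D) (hXne : X.Nonempty) :
    ∃ le : W → W → Prop, RationalOrder le S M ∧ MinSet le (a ∩ S) = X := by
  classical
  set rk : W → ℕ := fun x => if x ∈ M then 0 else if x ∈ X then 1 else 2 with hrk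
  refine ⟨fun x y => rk x ≤ rk y, ⟨fun x _ => le_refl _,
    fun x _ y _ z _ hxy hyz => le_trans hxy hyz,
    fun x _ y _ => le_total _ _, ?_, ?_⟩, ?_⟩
  · -- MinSet = M
    ext x
    simp only [MinSet, Set.mem_setOf_eq, not_exists, not_and, not_not]
    constructor
    · rintro ⟨hxS, hmin⟩
      by_contra hxM
      obtain ⟨m, hm⟩ := hMne
      have := hmin m (hMS hm)
      have h0 : rk m = 0 := by simp [hrk, hm]
      have h1 : 1 ≤ rk x := by
        simp only [hrk]
        by_cases hX' : x ∈ X <;> simp [hxM, hX']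
      omega
    · intro hxM
      refine ⟨hMS hxM, fun y _ _ => ?_⟩
      have : rk x = 0 := by simp [hrk, hxM]
      omega
  · -- minimality
    intro F hFS hFne
    have key : ∀ n : ℕ, (∃ z ∈ F, rk z = n) → (MinSet (fun x y => rk x ≤ rk y) F).Nonempty := by
      intro n
      induction n using Nat.strong_induction_on with
      | _ n ih =>
        rintro ⟨z, hzF, hz⟩
        by_cases hmin : ∃ y ∈ F, rk y ≤ rk z ∧ ¬ rk z ≤ rk y
        · obtain ⟨y, hyF, h1, h2⟩ := hmin
          exact ih (rk y) (by omega) ⟨y, hyF, rfl⟩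
        · exact ⟨z, hzF, hmin⟩
    obtain ⟨z, hz⟩ := hFne
    exact key (rk z) ⟨z, hz, rfl⟩
  · -- MinSet (a ∩ S) = X
    have hXM : ∀ x ∈ X, x ∉ M := by
      intro x hx hxM
      have : x ∈ M ∩ a := ⟨hxM, (hD (hX hx)).1⟩
      rw [hrej] at this; exact this
    have hXas : X ⊆ a ∩ S := fun x hx => hD (hX hx)
    ext x
    simp only [MinSet, Set.mem_setOf_eq, not_exists, not_and, not_not]
    constructor
    · rintro ⟨hxaS, hmin⟩
      by_contra hxX
      obtain ⟨w, hw⟩ := hXne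
      have hw1 : rk w = 1 := by simp [hrk, hXM w hw, hw]
      have := hmin w (hXas hw)
      have hxM : x ∉ M := by
        intro hxM
        have : x ∈ M ∩ a := ⟨hxM, hxaS.1⟩
        rw [hrej] at this; exact this
      have h2 : rk x = 2 := by simp [hrk, hxM, hxX]
      omega
    · intro hxX
      refine ⟨hXas hxX, fun y hy _ => ?_⟩
      have hx1 : rk x = 1 := by simp [hrk, hXM x hxX, hxX]
      have hyM : y ∉ M := by
        intro hyM
        have : y ∈ M ∩ a := ⟨hyM, hy.1⟩
        rw [hrej] at this; exact this
      have : 1 ≤ rk y := by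
        simp only [hrk]
        by_cases hy' : y ∈ X <;> simp [hyM, hy']
      omega
end
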